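/- Let a Knapsack instance have n items with profits p_i ∈ ℕ, sizes s_i ∈ (0,1], capacity 1, and let ε ∈ (0,1], P = ⌈n²/ε⌉. Let p^OPT be the optimal profit and p^NN = max{ p·d_n : p ∈ [P], g(p,n) ≤ 1 } where g and d_n = max(1, (∑_j p_j)/P) come from the FPTAS-NN recursion. Then p^NN ≥ (1 - ε)·p^OPT. -/

import Mathlib

/-- The rounding granularity `d_i = max(1, (∑_{j ≤ i} p_j) / P)` of the FPTAS-NN. -/
noncomputable def granularity (P : ℕ) (pr : ℕ → ℕ) (i : ℕ) : ℝ :=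
  max 1 ((∑ j ∈ Finset.Icc 1 i, (pr j : ℝ)) / P)

lemma gran_one_le (P : ℕ) (pr : ℕ → ℕ) (i : ℕ) : 1 ≤ granularity P pr i :=
  le_max_left _ _

lemma gran_pos (P : ℕ) (pr : ℕ → ℕ) (i : ℕ) : 0 < granularity P pr i :=
  lt_of_lt_of_le one_pos (gran_one_le P pr i)

lemma gran_mono (P : ℕ) (hP : 1 ≤ P) (pr : ℕ → ℕ) {i j : ℕ} (hij : i ≤ j) :
    granularity P pr i ≤ granularity P pr j := by
  have hP0 : (0:ℝ) < P := by exact_mod_cast hP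
  apply max_le_max le_rfl
  apply div_le_div_of_nonneg_right ?_ hP0.le
  exact Finset.sum_le_sum_of_subset_of_nonneg (Finset.Icc_subset_Icc_right hij)
    (fun j _ _ => Nat.cast_nonneg _)

lemma gran_sum_le (P : ℕ) (hP : 1 ≤ P) (pr : ℕ → ℕ) (i : ℕ) :
    (∑ j ∈ Finset.Icc 1 i, (pr j : ℝ)) ≤ (P : ℝ) * granularity P pr i := by
  have hP0 : (0:ℝ) < P := by exact_mod_cast hP
  have : (∑ j ∈ Finset.Icc 1 i, (pr j : ℝ)) / P ≤ granularity P pr i := le_max_right _ _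
  calc (∑ j ∈ Finset.Icc 1 i, (pr j : ℝ)) = P * ((∑ j ∈ Finset.Icc 1 i, (pr j : ℝ)) / P) := by
        field_simp
    _ ≤ P * granularity P pr i := mul_le_mul_of_nonneg_left this (le_of_lt hP0)

lemma gran_zero (P : ℕ) (pr : ℕ → ℕ) : granularity P pr 0 = 1 := by
  simp [granularity]

set_option maxHeartbeats 1000000 in
lemma claimA (n : ℕ) (P : ℕ) (hP1 : 1 ≤ P)
    (pr : ℕ → ℕ) (hpr : ∀ j, 1 ≤ pr j)
    (s : ℕ → ℝ) (hs : ∀ j, 0 < s j ∧ s j ≤ 1)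
    (g : ℕ → ℕ → ℝ)
    (hgrec : ∀ i ∈ Finset.Icc 1 n, ∀ p ∈ Finset.Icc 1 P, ∀ k1 k2 : ℤ,
      IsLeast {k : ℤ | (p : ℝ) * granularity P pr i ≤ (k : ℝ) * granularity P pr (i - 1)} k1 →
      IsLeast {k : ℤ | (p : ℝ) * granularity P pr i ≤
        (k : ℝ) * granularity P pr (i - 1) + (pr i : ℝ)} k2 →
      g p i = min (if k1 ≤ (P : ℤ) then g k1.toNat (i - 1) else 2)
        (s i + if 1 ≤ k2 then g k2.toNat (i - 1) else 0)) :
    ∀ i, i ≤ n → ∀ M ⊆ Finset.Icc 1 i, ∀ p : ℕ, 1 ≤ p → p ≤ P →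
      (p : ℝ) * granularity P pr i <
        (∑ j ∈ M, (pr j : ℝ)) - ((i : ℝ) - 1) * granularity P pr i →
      g p i ≤ ∑ j ∈ M, s j := by
  intro i
  induction i with
  | zero =>
    intro _ M hM p hp1 _ hlt
    have hM0 : M = ∅ := by
      have h0 : Finset.Icc 1 0 = (∅ : Finset ℕ) := by simp
      rw [h0] at hM
      exact Finset.subset_empty.mp hM
    subst hM0
    rw [gran_zero] at hlt
    have : (1:ℝ) ≤ p := by exact_mod_cast hp1
    simp at hlt
    linarith
  | succ i ih =>
    intro hin M hM p hp1 hpP hlt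
    set d := granularity P pr i with hd_def
    set D := granularity P pr (i+1) with hD_def
    have hd1 : (1:ℝ) ≤ d := gran_one_le P pr i
    have hd0 : (0:ℝ) < d := gran_pos P pr i
    have hD1 : (1:ℝ) ≤ D := gran_one_le P pr (i+1)
    have hdD : d ≤ D := gran_mono P hP1 pr (Nat.le_succ i)
    have hsum : (∑ j ∈ Finset.Icc 1 i, (pr j : ℝ)) ≤ (P : ℝ) * d := gran_sum_le P hP1 pr i
    have hp1R : (1:ℝ) ≤ p := by exact_mod_cast hp1
    -- the least values, made opaque
    obtain ⟨k1, hk1⟩ : ∃ k1, IsLeast {k : ℤ | (p : ℝ) * D ≤ (k : ℝ) * d} k1 := by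
      refine ⟨⌈(p : ℝ) * D / d⌉, ?_, ?_⟩
      · exact (div_le_iff₀ hd0).mp (Int.le_ceil _)
      · intro k hk
        exact Int.ceil_le.mpr ((div_le_iff₀ hd0).mpr hk)
    obtain ⟨k2, hk2⟩ : ∃ k2, IsLeast {k : ℤ | (p : ℝ) * D ≤ (k : ℝ) * d + (pr (i+1) : ℝ)} k2 := by
      refine ⟨⌈((p : ℝ) * D - pr (i+1)) / d⌉, ?_, ?_⟩
      · have h := (div_le_iff₀ hd0).mp (Int.le_ceil (((p : ℝ) * D - pr (i+1)) / d))
        simp only [Set.mem_setOf_eq]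
        linarith
      · intro k hk
        apply Int.ceil_le.mpr
        apply (div_le_iff₀ hd0).mpr
        simp only [Set.mem_setOf_eq] at hk
        linarith
    have geq := hgrec (i+1) (Finset.mem_Icc.mpr ⟨Nat.succ_le_succ (Nat.zero_le i), hin⟩)
      p (Finset.mem_Icc.mpr ⟨hp1, hpP⟩) k1 k2 hk1 hk2
    simp only [Nat.add_sub_cancel] at geq
    -- bounds on k1
    have hk1low : (p : ℝ) * D ≤ (k1 : ℝ) * d := hk1.1
    have hk1up : (k1 : ℝ) * d < (p : ℝ) * D + d := by
      have hnot : ¬ ((p : ℝ) * D ≤ ((k1 - 1 : ℤ) : ℝ) * d) := by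
        intro h
        have := hk1.2 h
        omega
      push_neg at hnot
      push_cast at hnot
      nlinarith
    have hk1pos : 1 ≤ k1 := by
      by_contra hcon
      push_neg at hcon
      have h0 : k1 ≤ 0 := by omega
      have : (k1 : ℝ) ≤ 0 := by exact_mod_cast h0
      nlinarith
    -- rewrite main hypothesis
    have hlt' : (p : ℝ) * D < (∑ j ∈ M, (pr j : ℝ)) - (i : ℝ) * D := by
      push_cast at hlt
      linarith
    have hiD : (i : ℝ) * d ≤ (i : ℝ) * D :=
      mul_le_mul_of_nonneg_left hdD (Nat.cast_nonneg i)
    have hiDnn : (0:ℝ) ≤ (i : ℝ) * D := by positivity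
    by_cases hmem : (i+1) ∈ M
    · -- include item i+1
      set M' := M.erase (i+1) with hM'_def
      have hM'sub : M' ⊆ Finset.Icc 1 i := by
        intro j hj
        have hj1 := Finset.mem_of_mem_erase hj
        have hjne := Finset.ne_of_mem_erase hj
        have := Finset.mem_Icc.mp (hM hj1)
        exact Finset.mem_Icc.mpr ⟨this.1, by omega⟩
      have hsplit : (∑ j ∈ M, (pr j : ℝ)) = (∑ j ∈ M', (pr j : ℝ)) + pr (i+1) :=
        (Finset.sum_erase_add M _ hmem).symm
      have hsplit_s : (∑ j ∈ M, s j) = (∑ j ∈ M', s j) + s (i+1) :=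
        (Finset.sum_erase_add M _ hmem).symm
      have hM'nonneg : (0:ℝ) ≤ ∑ j ∈ M', s j :=
        Finset.sum_nonneg (fun j _ => (hs j).1.le)
      by_cases hk2pos : 1 ≤ k2
      · have hk2up : (k2 : ℝ) * d < (p : ℝ) * D - pr (i+1) + d := by
          have hnot : ¬ ((p : ℝ) * D ≤ ((k2 - 1 : ℤ) : ℝ) * d + pr (i+1)) := by
            intro h
            have := hk2.2 h
            omega
          push_neg at hnot
          push_cast at hnot
          nlinarith
        have hSM' : (∑ j ∈ M', (pr j : ℝ)) ≤ ∑ j ∈ Finset.Icc 1 i, (pr j : ℝ) :=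
          Finset.sum_le_sum_of_subset_of_nonneg hM'sub (fun j _ _ => Nat.cast_nonneg _)
        have hk2P : k2 ≤ (P : ℤ) := by
          have h1 : (k2 : ℝ) * d < ((P : ℝ) + 1) * d := by nlinarith
          have hk2R : (k2 : ℝ) < (P : ℝ) + 1 := lt_of_mul_lt_mul_right h1 hd0.le
          have h2 : (k2 : ℤ) < (P : ℤ) + 1 := by exact_mod_cast hk2R
          omega
        have hk2cast : ((k2.toNat : ℕ) : ℝ) = (k2 : ℝ) := by
          exact_mod_cast Int.toNat_of_nonneg (show (0:ℤ) ≤ k2 by omega)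
        have hih := ih (Nat.le_of_succ_le hin) M' hM'sub k2.toNat (by omega) (by omega)
          (by rw [hk2cast]; nlinarith)
        rw [geq]
        refine le_trans (min_le_right _ _) ?_
        rw [if_pos hk2pos, hsplit_s]
        linarith
      · rw [geq]
        refine le_trans (min_le_right _ _) ?_
        rw [if_neg hk2pos, hsplit_s]
        have := (hs (i+1)).1
        linarith
    · -- exclude item i+1
      have hMsub' : M ⊆ Finset.Icc 1 i := by
        intro j hj
        have := Finset.mem_Icc.mp (hM hj)
        have hne : j ≠ i+1 := fun h => hmem (h ▸ hj)
        exact Finset.mem_Icc.mpr ⟨this.1, by omega⟩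
      have hSM : (∑ j ∈ M, (pr j : ℝ)) ≤ ∑ j ∈ Finset.Icc 1 i, (pr j : ℝ) :=
        Finset.sum_le_sum_of_subset_of_nonneg hMsub' (fun j _ _ => Nat.cast_nonneg _)
      have hk1P : k1 ≤ (P : ℤ) := by
        have h1 : (k1 : ℝ) * d < ((P : ℝ) + 1) * d := by nlinarith
        have hk1R : (k1 : ℝ) < (P : ℝ) + 1 := lt_of_mul_lt_mul_right h1 hd0.le
        have h2 : (k1 : ℤ) < (P : ℤ) + 1 := by exact_mod_cast hk1R
        omega
      have hk1cast : ((k1.toNat : ℕ) : ℝ) = (k1 : ℝ) := by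
        exact_mod_cast Int.toNat_of_nonneg (show (0:ℤ) ≤ k1 by omega)
      have hih := ih (Nat.le_of_succ_le hin) M hMsub' k1.toNat (by omega) (by omega)
        (by rw [hk1cast]; nlinarith)
      rw [geq]
      refine le_trans (min_le_left _ _) ?_
      rw [if_pos hk1P]
      exact hih

set_option maxHeartbeats 1000000 in
lemma claimB (n : ℕ) (P : ℕ) (hP1 : 1 ≤ P)
    (pr : ℕ → ℕ) (hpr : ∀ j, 1 ≤ pr j)
    (s : ℕ → ℝ) (hs : ∀ j, 0 < s j ∧ s j ≤ 1)
    (g : ℕ → ℕ → ℝ)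
    (hgrec : ∀ i ∈ Finset.Icc 1 n, ∀ p ∈ Finset.Icc 1 P, ∀ k1 k2 : ℤ,
      IsLeast {k : ℤ | (p : ℝ) * granularity P pr i ≤ (k : ℝ) * granularity P pr (i - 1)} k1 →
      IsLeast {k : ℤ | (p : ℝ) * granularity P pr i ≤
        (k : ℝ) * granularity P pr (i - 1) + (pr i : ℝ)} k2 →
      g p i = min (if k1 ≤ (P : ℤ) then g k1.toNat (i - 1) else 2)
        (s i + if 1 ≤ k2 then g k2.toNat (i - 1) else 0))
    (hone : ∀ j, j ≤ n → granularity P pr j = 1) :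
    ∀ i, i ≤ n → ∀ M ⊆ Finset.Icc 1 i, ∀ p : ℕ, 1 ≤ p → p ≤ P →
      (p : ℝ) ≤ (∑ j ∈ M, (pr j : ℝ)) →
      g p i ≤ ∑ j ∈ M, s j := by
  intro i
  induction i with
  | zero =>
    intro _ M hM p hp1 _ hle
    have hM0 : M = ∅ := by
      have h0 : Finset.Icc 1 0 = (∅ : Finset ℕ) := by simp
      rw [h0] at hM
      exact Finset.subset_empty.mp hM
    subst hM0
    have : (1:ℝ) ≤ p := by exact_mod_cast hp1
    simp at hle
    linarith
  | succ i ih =>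
    intro hin M hM p hp1 hpP hle
    have hdi : granularity P pr i = 1 := hone i (by omega)
    have hdi1 : granularity P pr (i+1) = 1 := hone (i+1) hin
    -- the least values
    have hk1 : IsLeast {k : ℤ | (p : ℝ) * granularity P pr (i+1) ≤
        (k : ℝ) * granularity P pr i} (p : ℤ) := by
      rw [hdi, hdi1]
      constructor
      · simp
      · intro k hk
        simp only [Set.mem_setOf_eq, mul_one] at hk
        exact_mod_cast hk
    have hk2 : IsLeast {k : ℤ | (p : ℝ) * granularity P pr (i+1) ≤
        (k : ℝ) * granularity P pr i + (pr (i+1) : ℝ)} ((p : ℤ) - (pr (i+1) : ℤ)) := by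
      rw [hdi, hdi1]
      constructor
      · simp only [Set.mem_setOf_eq, mul_one]
        push_cast
        linarith
      · intro k hk
        simp only [Set.mem_setOf_eq, mul_one] at hk
        have : (p : ℝ) - (pr (i+1) : ℝ) ≤ (k : ℝ) := by linarith
        exact_mod_cast this
    have geq := hgrec (i+1) (Finset.mem_Icc.mpr ⟨Nat.succ_le_succ (Nat.zero_le i), hin⟩)
      p (Finset.mem_Icc.mpr ⟨hp1, hpP⟩) _ _ hk1 hk2
    simp only [Nat.add_sub_cancel] at geq
    by_cases hmem : (i+1) ∈ M
    · -- include item i+1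
      set M' := M.erase (i+1) with hM'_def
      have hM'sub : M' ⊆ Finset.Icc 1 i := by
        intro j hj
        have hj1 := Finset.mem_of_mem_erase hj
        have hjne := Finset.ne_of_mem_erase hj
        have := Finset.mem_Icc.mp (hM hj1)
        exact Finset.mem_Icc.mpr ⟨this.1, by omega⟩
      have hsplit : (∑ j ∈ M, (pr j : ℝ)) = (∑ j ∈ M', (pr j : ℝ)) + pr (i+1) :=
        (Finset.sum_erase_add M _ hmem).symm
      have hsplit_s : (∑ j ∈ M, s j) = (∑ j ∈ M', s j) + s (i+1) :=
        (Finset.sum_erase_add M _ hmem).symm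
      have hM'nonneg : (0:ℝ) ≤ ∑ j ∈ M', s j :=
        Finset.sum_nonneg (fun j _ => (hs j).1.le)
      by_cases hk2pos : 1 ≤ (p : ℤ) - (pr (i+1) : ℤ)
      · have hq1 : 1 ≤ ((p : ℤ) - (pr (i+1) : ℤ)).toNat := by omega
        have hqP : ((p : ℤ) - (pr (i+1) : ℤ)).toNat ≤ P := by
          have := hpr (i+1)
          omega
        have hqle : ((((p : ℤ) - (pr (i+1) : ℤ)).toNat : ℕ) : ℝ) ≤ ∑ j ∈ M', (pr j : ℝ) := by
          have hcast : ((((p : ℤ) - (pr (i+1) : ℤ)).toNat : ℕ) : ℝ) = (p : ℝ) - (pr (i+1) : ℝ) := by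
            exact_mod_cast Int.toNat_of_nonneg
              (show (0:ℤ) ≤ (p : ℤ) - (pr (i+1) : ℤ) by omega)
          rw [hcast]
          linarith
        have hih := ih (Nat.le_of_succ_le hin) M' hM'sub _ hq1 hqP hqle
        rw [geq]
        refine le_trans (min_le_right _ _) ?_
        rw [if_pos hk2pos, hsplit_s]
        linarith
      · rw [geq]
        refine le_trans (min_le_right _ _) ?_
        rw [if_neg hk2pos, hsplit_s]
        have := (hs (i+1)).1
        linarith
    · -- exclude item i+1
      have hMsub' : M ⊆ Finset.Icc 1 i := by
        intro j hj
        have := Finset.mem_Icc.mp (hM hj)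
        have hne : j ≠ i+1 := fun h => hmem (h ▸ hj)
        exact Finset.mem_Icc.mpr ⟨this.1, by omega⟩
      have hih := ih (Nat.le_of_succ_le hin) M hMsub' p hp1 hpP hle
      rw [geq]
      refine le_trans (min_le_left _ _) ?_
      rw [if_pos (by exact_mod_cast hpP : (p : ℤ) ≤ (P : ℤ))]
      simpa using hih

set_option maxHeartbeats 1000000 in
theorem fptas_nn_approximation (n : ℕ) (hn : 1 ≤ n)
    (ε : ℝ) (hε : 0 < ε ∧ ε ≤ 1) (P : ℕ) (hP : P = ⌈(n : ℝ) ^ 2 / ε⌉₊)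
    (pr : ℕ → ℕ) (hpr : ∀ j, 1 ≤ pr j)
    (s : ℕ → ℝ) (hs : ∀ j, 0 < s j ∧ s j ≤ 1)
    (g : ℕ → ℕ → ℝ)
    (hg0 : ∀ p ∈ Finset.Icc 1 P, g p 0 = 2)
    (hgrec : ∀ i ∈ Finset.Icc 1 n, ∀ p ∈ Finset.Icc 1 P, ∀ k1 k2 : ℤ,
      IsLeast {k : ℤ | (p : ℝ) * granularity P pr i ≤ (k : ℝ) * granularity P pr (i - 1)} k1 →
      IsLeast {k : ℤ | (p : ℝ) * granularity P pr i ≤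
        (k : ℝ) * granularity P pr (i - 1) + (pr i : ℝ)} k2 →
      g p i = min (if k1 ≤ (P : ℤ) then g k1.toNat (i - 1) else 2)
        (s i + if 1 ≤ k2 then g k2.toNat (i - 1) else 0))
    (pOPT : ℝ)
    (hOPT : IsGreatest {x : ℝ | ∃ M : Finset ℕ, M ⊆ Finset.Icc 1 n ∧
      (∑ j ∈ M, s j) ≤ 1 ∧ x = ∑ j ∈ M, (pr j : ℝ)} pOPT)
    (pNN : ℝ)
    (hNN : IsGreatest {x : ℝ | ∃ p ∈ Finset.Icc 1 P, g p n ≤ 1 ∧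
      x = (p : ℝ) * granularity P pr n} pNN) :
    (1 - ε) * pOPT ≤ pNN := by
  obtain ⟨hε0, hε1⟩ := hε
  obtain ⟨⟨Mopt, hMsub, hMsize, hMval⟩, hOPTub⟩ := hOPT
  obtain ⟨⟨p0, hp0mem, hp0g, hp0val⟩, hNNub⟩ := hNN
  have hn1R : (1:ℝ) ≤ n := by exact_mod_cast hn
  have hn0 : (0:ℝ) < n := by linarith
  have hP1 : 1 ≤ P := by
    rw [hP]
    have h : 0 < ⌈(n : ℝ) ^ 2 / ε⌉₊ := Nat.ceil_pos.mpr (by positivity)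
    omega
  have hP0R : (0:ℝ) < P := by exact_mod_cast hP1
  set D := granularity P pr n with hD_def
  have hD1 : (1:ℝ) ≤ D := gran_one_le P pr n
  have hD0 : (0:ℝ) < D := gran_pos P pr n
  -- singletons are feasible
  have hsing : ∀ j ∈ Finset.Icc 1 n, (pr j : ℝ) ≤ pOPT := by
    intro j hj
    apply hOPTub
    exact ⟨{j}, Finset.singleton_subset_iff.mpr hj, by simpa using (hs j).2, by simp⟩
  have hpOPT1 : (1:ℝ) ≤ pOPT := by
    have h1 : (1:ℝ) ≤ pr 1 := by exact_mod_cast hpr 1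
    exact le_trans h1 (hsing 1 (Finset.mem_Icc.mpr ⟨le_rfl, hn⟩))
  set S := ∑ j ∈ Finset.Icc 1 n, (pr j : ℝ) with hS_def
  have hoptle : pOPT ≤ S := by
    rw [hMval]
    exact Finset.sum_le_sum_of_subset_of_nonneg hMsub (fun j _ _ => Nat.cast_nonneg _)
  have hSle : S ≤ (n : ℝ) * pOPT := by
    have hcard : (Finset.Icc 1 n).card = n := by rw [Nat.card_Icc]; omega
    calc S ≤ ∑ _j ∈ Finset.Icc 1 n, pOPT := Finset.sum_le_sum hsing
      _ = (n : ℝ) * pOPT := by rw [Finset.sum_const, hcard, nsmul_eq_mul]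
  have hpNN0 : (0:ℝ) ≤ pNN := by
    rw [hp0val]
    positivity
  by_cases hcase : S ≤ (P : ℝ)
  · -- exact case : all granularities are 1
    have hone : ∀ j, j ≤ n → granularity P pr j = 1 := by
      intro j hj
      apply max_eq_left
      rw [div_le_one hP0R]
      calc (∑ k ∈ Finset.Icc 1 j, (pr k : ℝ)) ≤ S :=
            Finset.sum_le_sum_of_subset_of_nonneg (Finset.Icc_subset_Icc_right hj)
              (fun k _ _ => Nat.cast_nonneg _)
        _ ≤ P := hcase
    set pN : ℕ := ∑ j ∈ Mopt, pr j with hpN_def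
    have hpNcast : (pN : ℝ) = pOPT := by
      rw [hMval, hpN_def]
      push_cast
      rfl
    have hpN1 : 1 ≤ pN := by
      have : (1:ℝ) ≤ (pN : ℝ) := hpNcast ▸ hpOPT1
      exact_mod_cast this
    have hpNP : pN ≤ P := by
      have : (pN : ℝ) ≤ (P : ℝ) := by rw [hpNcast]; linarith
      exact_mod_cast this
    have hg := claimB n P hP1 pr hpr s hs g hgrec hone n le_rfl Mopt hMsub pN hpN1 hpNP
      (le_of_eq (by rw [hpNcast, hMval]))
    have hgle : g pN n ≤ 1 := le_trans hg hMsize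
    have hmem : pOPT ∈ {x : ℝ | ∃ p ∈ Finset.Icc 1 P, g p n ≤ 1 ∧
        x = (p : ℝ) * granularity P pr n} := by
      refine ⟨pN, Finset.mem_Icc.mpr ⟨hpN1, hpNP⟩, hgle, ?_⟩
      rw [hone n le_rfl, mul_one]
      exact hpNcast.symm
    have hfin := hNNub hmem
    nlinarith
  · push_neg at hcase
    have hDval : D = S / P := by
      apply max_eq_right
      rw [le_div_iff₀ hP0R]
      linarith
    have hPD : (P : ℝ) * D = S := by
      rw [hDval]
      field_simp
    have hεP : (n : ℝ) ^ 2 / ε ≤ P := by rw [hP]; exact Nat.le_ceil _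
    have hnD : (n : ℝ) * D ≤ ε * pOPT := by
      rw [hDval]
      have h2 : (n : ℝ) ^ 2 * pOPT ≤ ε * pOPT * P := by
        have h3 := mul_le_mul_of_nonneg_left hεP (show (0:ℝ) ≤ ε * pOPT by positivity)
        calc (n : ℝ) ^ 2 * pOPT = ε * pOPT * ((n : ℝ) ^ 2 / ε) := by
              field_simp
          _ ≤ ε * pOPT * P := h3
      have h1 : (n : ℝ) * S ≤ ε * pOPT * P := by nlinarith
      calc (n : ℝ) * (S / P) = (n * S) / P := by ring
        _ ≤ (ε * pOPT * P) / P := div_le_div_of_nonneg_right h1 hP0R.le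
        _ = ε * pOPT := by field_simp
    by_cases hbig : pOPT ≤ (n : ℝ) * D
    · nlinarith
    · push_neg at hbig
      set x := pOPT / D - ((n : ℝ) - 1) with hx_def
      have hx1 : 1 < x := by
        have hnx : (n : ℝ) < pOPT / D := (lt_div_iff₀ hD0).mpr (by linarith)
        rw [hx_def]
        linarith
      set q : ℤ := ⌈x⌉ - 1 with hq_def
      have hq1 : 1 ≤ q := by
        have h1 : (1 : ℤ) < ⌈x⌉ := Int.lt_ceil.mpr (by exact_mod_cast hx1)
        omega
      have hqx : (q : ℝ) < x := by
        have := Int.ceil_lt_add_one x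
        rw [hq_def]
        push_cast
        linarith
      have hqx2 : x - 1 ≤ (q : ℝ) := by
        have := Int.le_ceil x
        rw [hq_def]
        push_cast
        linarith
      have hxD : x * D = pOPT - ((n : ℝ) - 1) * D := by
        rw [hx_def, sub_mul, div_mul_cancel₀ _ (ne_of_gt hD0)]
      have hqD : (q : ℝ) * D < pOPT - ((n : ℝ) - 1) * D := by
        rw [← hxD]
        exact mul_lt_mul_of_pos_right hqx hD0
      have hqD2 : pOPT - (n : ℝ) * D ≤ (q : ℝ) * D := by
        have h4 := mul_le_mul_of_nonneg_right hqx2 hD0.le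
        rw [sub_mul, one_mul, hxD] at h4
        linarith
      have hqP : q ≤ (P : ℤ) := by
        have hn1D : (0:ℝ) ≤ ((n:ℝ) - 1) * D := by
          apply mul_nonneg _ hD0.le
          linarith [hn1R]
        have h1 : (q : ℝ) * D < (P : ℝ) * D := by
          rw [hPD]
          linarith
        have h2 : (q : ℝ) < P := lt_of_mul_lt_mul_right h1 hD0.le
        have h3 : q < (P : ℤ) := by exact_mod_cast h2
        omega
      have hqcast : ((q.toNat : ℕ) : ℝ) = (q : ℝ) := by
        exact_mod_cast Int.toNat_of_nonneg (show (0:ℤ) ≤ q by omega)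
      have hq1n : 1 ≤ q.toNat := by omega
      have hqPn : q.toNat ≤ P := by omega
      have hg := claimA n P hP1 pr hpr s hs g hgrec n le_rfl Mopt hMsub q.toNat hq1n hqPn
        (by rw [hqcast, ← hD_def, ← hMval]; exact hqD)
      have hgle : g q.toNat n ≤ 1 := le_trans hg hMsize
      have hmem2 : ((q.toNat : ℕ) : ℝ) * D ∈ {x : ℝ | ∃ p ∈ Finset.Icc 1 P, g p n ≤ 1 ∧
          x = (p : ℝ) * granularity P pr n} :=
        ⟨q.toNat, Finset.mem_Icc.mpr ⟨hq1n, hqPn⟩, hgle, by rw [← hD_def]⟩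
      have hle2 := hNNub hmem2
      rw [hqcast] at hle2
      nlinarith
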